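/- Let y ~ N(0,1), r ∈ (0,1), ξ_r := ∑_{k=0}^∞ r^k/(k+2), λ ∈ ℝ, and t > 0 with 2t|λ| ≤ r. Then E[exp(tλ(y² - 1))] ≤ exp(2t²ξ_r λ²); i.e., λ(y²-1) is sub-exponential with explicit parameters. -/

import Mathlib

open MeasureTheory ProbabilityTheory
open scoped ENNReal NNReal

noncomputable def xi (r : ℝ) : ℝ := ∑' k : ℕ, r ^ k / ((k : ℝ) + 2)

-- Step 1: Gaussian integral of exp(s y²)
lemma gauss_sq_integral {s : ℝ} (hs : s < 1/2) :
    ∫ y, Real.exp (s * y ^ 2) ∂(gaussianReal 0 1) = (Real.sqrt (1 - 2*s))⁻¹ := by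
  rw [gaussianReal_of_var_ne_zero 0 one_ne_zero]
  have hd : gaussianPDF 0 1 = fun x => ((Real.toNNReal (gaussianPDFReal 0 1 x) : ℝ≥0) : ℝ≥0∞) := by
    funext x; rfl
  rw [hd, integral_withDensity_eq_integral_smul
    ((measurable_gaussianPDFReal 0 1).real_toNNReal)]
  have heq : ∀ x : ℝ, (Real.toNNReal (gaussianPDFReal 0 1 x)) • Real.exp (s * x ^ 2)
      = (Real.sqrt (2 * Real.pi))⁻¹ * Real.exp (-(1/2 - s) * x ^ 2) := by
    intro x
    rw [NNReal.smul_def, smul_eq_mul, Real.coe_toNNReal _ (gaussianPDFReal_nonneg 0 1 x)]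
    simp only [gaussianPDFReal]
    rw [mul_assoc, ← Real.exp_add]
    push_cast
    ring_nf
  simp_rw [heq]
  rw [integral_const_mul, integral_gaussian]
  have h2 : (0:ℝ) < 1 - 2*s := by linarith
  have hb : (0:ℝ) < 1/2 - s := by linarith
  have hpi : (0:ℝ) < Real.pi := Real.pi_pos
  rw [Real.sqrt_div hpi.le, show (1 - 2*s) = 2 * (1/2 - s) by ring,
    Real.sqrt_mul (by norm_num : (0:ℝ) ≤ 2), Real.sqrt_mul (by norm_num : (0:ℝ) ≤ 2)]
  have h2' : (0:ℝ) < Real.sqrt 2 := Real.sqrt_pos.2 (by norm_num)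
  have hpi' : (0:ℝ) < Real.sqrt Real.pi := Real.sqrt_pos.2 hpi
  have hb' : (0:ℝ) < Real.sqrt (1/2 - s) := Real.sqrt_pos.2 hb
  field_simp

lemma xi_summable {r : ℝ} (hr : |r| < 1) : Summable (fun k : ℕ => r ^ k / ((k : ℝ) + 2)) := by
  apply Summable.of_norm
  apply Summable.of_nonneg_of_le (fun k => norm_nonneg _) (fun k => ?_)
    (summable_geometric_of_lt_one (abs_nonneg r) hr)
  rw [Real.norm_eq_abs, abs_div, abs_pow]
  have hk : (0:ℝ) < (k : ℝ) + 2 := by positivity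
  rw [abs_of_pos hk]
  calc |r| ^ k / ((k:ℝ) + 2) ≤ |r| ^ k / 1 := by
        apply div_le_div_of_nonneg_left (by positivity) one_pos (by linarith)
    _ = |r| ^ k := div_one _

lemma key_ineq {r s : ℝ} (hr : r ∈ Set.Ioo (0 : ℝ) 1) (hs : 2 * |s| ≤ r) :
    Real.exp (-s) * (Real.sqrt (1 - 2 * s))⁻¹ ≤ Real.exp (2 * s ^ 2 * xi r) := by
  have habs : |2 * s| < 1 := by
    rw [abs_mul, abs_two]
    have := hr.2
    linarith
  have h2 : (0:ℝ) < 1 - 2 * s := by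
    rcases abs_lt.1 habs with ⟨h1, h2⟩; linarith
  -- rewrite LHS as exp of something
  have hsqrt : (Real.sqrt (1 - 2 * s))⁻¹ = Real.exp (-(Real.log (1 - 2 * s) / 2)) := by
    rw [Real.exp_neg, ← Real.log_sqrt h2.le, Real.exp_log (Real.sqrt_pos.2 h2)]
  rw [hsqrt, ← Real.exp_add, Real.exp_le_exp]
  -- series expansion
  have hsum := Real.hasSum_pow_div_log_of_abs_lt_one habs
  have hsum2 := (hasSum_nat_add_iff' 1).2 hsum
  simp only [Finset.range_one, Finset.sum_singleton, pow_one] at hsum2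
  -- hsum2 : HasSum (fun n => (2*s)^(n+1+1)/(n+1+1)) (-log(1-2s) - (2*s)/(0+1))
  have hsum3 : HasSum (fun n : ℕ => (4 * s ^ 2) * ((2*s) ^ n / ((n : ℝ) + 2)))
      (-Real.log (1 - 2*s) - 2*s) := by
    convert hsum2 using 1
    · rfl
    · funext n; push_cast; ring
    · norm_num
  have hsummable : Summable (fun n : ℕ => (2*s) ^ n / ((n : ℝ) + 2)) := xi_summable habs
  have hts : (4 * s ^ 2) * (∑' n : ℕ, (2*s) ^ n / ((n : ℝ) + 2))
      = -Real.log (1 - 2*s) - 2*s := by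
    rw [← tsum_mul_left]
    exact hsum3.tsum_eq
  have hle : (∑' n : ℕ, (2*s) ^ n / ((n : ℝ) + 2)) ≤ xi r := by
    apply Summable.tsum_le_tsum _ hsummable (xi_summable (by rw [abs_of_pos hr.1]; exact hr.2))
    intro k
    calc (2*s) ^ k / ((k:ℝ) + 2) ≤ |(2*s) ^ k / ((k:ℝ) + 2)| := le_abs_self _
      _ = |2*s| ^ k / ((k:ℝ) + 2) := by
          rw [abs_div, abs_pow, abs_of_pos (by positivity : (0:ℝ) < (k:ℝ) + 2)]
      _ ≤ r ^ k / ((k:ℝ) + 2) := by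
          apply div_le_div_of_nonneg_right _ (by positivity)
          · exact pow_le_pow_left₀ (abs_nonneg _) (by rwa [abs_mul, abs_two]) k
  have : -s + -(Real.log (1 - 2 * s) / 2) = (2 * s ^ 2) * (∑' n : ℕ, (2*s) ^ n / ((n : ℝ) + 2)) := by
    have := hts
    nlinarith [hts]
  rw [this]
  have h0 : (0:ℝ) ≤ 2 * s ^ 2 := by positivity
  calc (2 * s ^ 2) * (∑' n : ℕ, (2*s) ^ n / ((n : ℝ) + 2)) ≤ (2 * s ^ 2) * xi r :=
        mul_le_mul_of_nonneg_left hle h0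
    _ = 2 * s ^ 2 * xi r := rfl

theorem subexp_bound (r : ℝ) (hr : r ∈ Set.Ioo (0 : ℝ) 1) (lam t : ℝ) (ht : 0 < t)
    (htl : 2 * t * |lam| ≤ r) :
    ∫ y, Real.exp (t * lam * (y ^ 2 - 1)) ∂(gaussianReal 0 1)
      ≤ Real.exp (2 * t ^ 2 * xi r * lam ^ 2) := by
  set s := t * lam with hsdef
  have hs : 2 * |s| ≤ r := by
    rwa [hsdef, abs_mul, abs_of_pos ht, ← mul_assoc]
  have hs2 : s < 1/2 := by
    have := le_abs_self s
    have : 2 * s ≤ r := by nlinarith [le_abs_self s]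
    linarith [hr.2]
  have hrw : (fun y : ℝ => Real.exp (t * lam * (y ^ 2 - 1)))
      = fun y : ℝ => Real.exp (s * y ^ 2) * Real.exp (-s) := by
    funext y
    rw [← Real.exp_add, hsdef]
    ring_nf
  rw [hrw, integral_mul_const, gauss_sq_integral hs2]
  calc (Real.sqrt (1 - 2 * s))⁻¹ * Real.exp (-s)
      = Real.exp (-s) * (Real.sqrt (1 - 2 * s))⁻¹ := mul_comm _ _
    _ ≤ Real.exp (2 * s ^ 2 * xi r) := key_ineq hr hs
    _ = Real.exp (2 * t ^ 2 * xi r * lam ^ 2) := by rw [hsdef]; ring_nf
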